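/- Fix N ≥ 1 and consider the complex vector space with basis {φ_{(j,k)} : (j,k) ∈ (ℤ/Nℤ)²}. Define linear operators ρ(T) and ρ(S) by ρ(T)φ_{(j,k)} = e(jk/N)·φ_{(j,k)} and ρ(S)φ_{(j,k)} = (1/N)·Σ_{(j',k') ∈ (ℤ/Nℤ)²} e(-(jk'+j'k)/N)·φ_{(j',k')}, where e(x) = exp(2πix). Then for every positive divisor d of N, the vector v_d = Σ_{0≤j≤(N/d)-1} Σ_{0≤k≤d-1} φ_{(jd, kN/d)} satisfies ρ(T)v_d = v_d and ρ(S)v_d = v_d. -/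

import Mathlib

open Finset

/-- `e(x) = exp(2πix)`. -/
noncomputable def eTwoPi (x : ℝ) : ℂ := Complex.exp (2 * Real.pi * Complex.I * x)

/-- The Weil representation operator `ρ(T)` on `ℂ[(ℤ/Nℤ)²]`:
`ρ(T)φ_{(j,k)} = e(jk/N) φ_{(j,k)}`. -/
noncomputable def rhoT (N : ℕ) (f : ZMod N × ZMod N → ℂ) : ZMod N × ZMod N → ℂ :=
  fun p => eTwoPi (((p.1.val * p.2.val : ℕ) : ℝ) / N) * f p

/-- The Weil representation operator `ρ(S)` on `ℂ[(ℤ/Nℤ)²]`: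
`ρ(S)φ_{(j,k)} = (1/N) Σ_{(j',k')} e(-(jk'+j'k)/N) φ_{(j',k')}`. -/
noncomputable def rhoS (N : ℕ) [NeZero N] (f : ZMod N × ZMod N → ℂ) : ZMod N × ZMod N → ℂ :=
  fun p' => (1 / (N : ℂ)) *
    ∑ p : ZMod N × ZMod N,
      eTwoPi (-(((p.1.val * p'.2.val + p'.1.val * p.2.val : ℕ) : ℝ) / N)) * f p

/-- The vector `v_d = Σ_{0≤j<N/d} Σ_{0≤k<d} φ_{(jd, kN/d)}` for a divisor `d` of `N`. -/
noncomputable def weilVec (N d : ℕ) : ZMod N × ZMod N → ℂ :=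
  ∑ j ∈ Finset.range (N / d), ∑ k ∈ Finset.range d,
    Pi.single (((j * d : ℕ) : ZMod N), ((k * (N / d) : ℕ) : ZMod N)) (1 : ℂ)

/-- For every positive divisor `d` of `N`, the vector `v_d` is invariant under
both `ρ(T)` and `ρ(S)`. -/
lemma eTwoPi_add (x y : ℝ) : eTwoPi (x + y) = eTwoPi x * eTwoPi y := by
  rw [eTwoPi, eTwoPi, eTwoPi, ← Complex.exp_add]
  push_cast; ring_nf

lemma eTwoPi_int (n : ℤ) : eTwoPi n = 1 := by
  rw [eTwoPi, show ((2:ℂ) * Real.pi * Complex.I * ((n:ℝ):ℂ)) = (n:ℂ) * (2 * Real.pi * Complex.I) by push_cast; ring,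
    Complex.exp_int_mul_two_pi_mul_I]

lemma eTwoPi_eq_one_iff (x : ℝ) : eTwoPi x = 1 ↔ ∃ n : ℤ, x = n := by
  rw [eTwoPi, Complex.exp_eq_one_iff]
  constructor
  · rintro ⟨n, hn⟩
    refine ⟨n, ?_⟩
    have h2 : (2 * (Real.pi:ℂ) * Complex.I) ≠ 0 := by
      simp [Real.pi_ne_zero, Complex.I_ne_zero]
    have hx : (2 * (Real.pi:ℂ) * Complex.I) * x = (2 * (Real.pi:ℂ) * Complex.I) * n := by
      rw [hn]; ring
    have : (x:ℂ) = (n:ℂ) := mul_left_cancel₀ h2 hx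
    exact_mod_cast this
  · rintro ⟨n, rfl⟩
    exact ⟨n, by push_cast; ring⟩

lemma eTwoPi_pow (x : ℝ) (j : ℕ) : eTwoPi x ^ j = eTwoPi (j * x) := by
  rw [eTwoPi, eTwoPi, ← Complex.exp_nat_mul]
  push_cast; ring_nf

lemma gsum (m b : ℕ) (hm : 0 < m) :
    ∑ j ∈ Finset.range m, eTwoPi (-((j * b : ℝ) / m)) = if m ∣ b then (m : ℂ) else 0 := by
  have hm' : (m : ℝ) ≠ 0 := Nat.cast_ne_zero.2 hm.ne'
  have harg : ∀ j : ℕ, -((j * b : ℝ) / m) = j * (-(b : ℝ) / m) := by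
    intro j; ring
  simp_rw [harg, ← eTwoPi_pow]
  by_cases h : m ∣ b
  · obtain ⟨e, rfl⟩ := h
    have h1 : eTwoPi (-((m * e : ℕ) : ℝ) / m) = 1 := by
      rw [show (-((m * e : ℕ) : ℝ) / m) = ((-e : ℤ) : ℝ) by push_cast; field_simp, eTwoPi_int]
    rw [if_pos ⟨e, rfl⟩]
    simp only [h1, one_pow, sum_const, card_range, nsmul_eq_mul, mul_one]
  · rw [if_neg h]
    have hζ : eTwoPi (-(b : ℝ) / m) ≠ 1 := by
      intro h1
      obtain ⟨n, hn⟩ := (eTwoPi_eq_one_iff _).1 h1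
      have hb : (b : ℝ) = (-n : ℤ) * m := by
        push_cast
        field_simp at hn
        linarith
      have : (b : ℤ) = -n * m := by exact_mod_cast hb
      exact h (Int.natCast_dvd_natCast.1 ⟨-n, by rw [this]; ring⟩)
    rw [geom_sum_eq hζ]
    have : eTwoPi (-(b : ℝ) / m) ^ m = 1 := by
      rw [eTwoPi_pow, show (m : ℝ) * (-(b : ℝ) / m) = ((-b : ℤ) : ℝ) by push_cast; field_simp, eTwoPi_int]
    rw [this]; simp

lemma ind_sum (N d m : ℕ) [NeZero N] (hdm : d * m = N) (hd : 0 < d) (x : ZMod N) :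
    ∑ j ∈ Finset.range m, (if x = ((j * d : ℕ) : ZMod N) then (1 : ℂ) else 0)
      = if d ∣ x.val then 1 else 0 := by
  have hN : 0 < N := Nat.pos_of_ne_zero (NeZero.ne N)
  have hlt : ∀ j, j ∈ Finset.range m → j * d < N := by
    intro j hj
    rw [← hdm, mul_comm d m]
    exact (Nat.mul_lt_mul_right hd).2 (mem_range.1 hj)
  have hiff : ∀ j, j ∈ Finset.range m → (x = ((j * d : ℕ) : ZMod N) ↔ x.val = j * d) := by
    intro j hj
    constructor
    · intro h; rw [h, ZMod.val_cast_of_lt (hlt j hj)]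
    · intro h; rw [← h]; exact (ZMod.natCast_rightInverse x).symm
  by_cases h : d ∣ x.val
  · obtain ⟨e, he⟩ := h
    have hxlt : x.val < N := ZMod.val_lt x
    have helt : e < m := by
      have : d * e < d * m := by rw [hdm, ← he]; exact hxlt
      exact lt_of_mul_lt_mul_left this (Nat.zero_le d)
    rw [if_pos ⟨e, he⟩]
    rw [Finset.sum_eq_single_of_mem e (mem_range.2 helt)]
    · rw [if_pos ((hiff e (mem_range.2 helt)).2 (by rw [he]; ring))]
    · intro j hj hje
      rw [if_neg]
      intro hx
      have := (hiff j hj).1 hx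
      have : e * d = j * d := by rw [← this, he]; ring
      exact hje (Nat.eq_of_mul_eq_mul_right hd this).symm
  · rw [if_neg h, Finset.sum_eq_zero]
    intro j hj
    rw [if_neg]
    intro hx
    exact h ⟨j, by rw [(hiff j hj).1 hx]; ring⟩

lemma weilVec_apply (N d : ℕ) [NeZero N] (hdvd : d ∣ N) (hd : 0 < d) (p : ZMod N × ZMod N) :
    weilVec N d p = if d ∣ p.1.val ∧ (N / d) ∣ p.2.val then 1 else 0 := by
  set m := N / d with hm
  have hdm : d * m = N := Nat.mul_div_cancel' hdvd
  have hN : 0 < N := Nat.pos_of_ne_zero (NeZero.ne N)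
  have hm0 : 0 < m := Nat.div_pos (Nat.le_of_dvd hN hdvd) hd
  have expand : weilVec N d p
      = ∑ j ∈ Finset.range m, ∑ k ∈ Finset.range d,
          (if p.1 = ((j * d : ℕ) : ZMod N) then (1:ℂ) else 0)
          * (if p.2 = ((k * m : ℕ) : ZMod N) then (1:ℂ) else 0) := by
    rw [weilVec]
    rw [Finset.sum_apply]
    refine Finset.sum_congr rfl fun j _ => ?_
    rw [Finset.sum_apply]
    refine Finset.sum_congr rfl fun k _ => ?_
    simp only [Pi.single_apply, Prod.ext_iff, ite_and, ← hm]
    by_cases h1 : p.1 = ((j * d : ℕ) : ZMod N) <;>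
      by_cases h2 : p.2 = ((k * m : ℕ) : ZMod N) <;>
      simp only [h1, h2, if_true, if_false, mul_one, mul_zero, ite_mul, one_mul, zero_mul, if_neg, not_false_iff] <;>
      simp [h1, h2]
  rw [expand, ← Finset.sum_mul_sum, ind_sum N d m hdm hd p.1,
      ind_sum N m d (by rw [mul_comm]; exact hdm) hm0 p.2]
  by_cases h1 : d ∣ p.1.val <;> by_cases h2 : m ∣ p.2.val <;> simp [h1, h2]

theorem weilVec_invariant (N : ℕ) [NeZero N] (hN : 1 ≤ N) (d : ℕ) (hd : d ∈ N.divisors) :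
    rhoT N (weilVec N d) = weilVec N d ∧ rhoS N (weilVec N d) = weilVec N d := by
  obtain ⟨hdvd, hNne⟩ := Nat.mem_divisors.1 hd
  have hd0 : 0 < d := Nat.pos_of_dvd_of_pos hdvd hN
  set m := N / d with hm
  have hdm : d * m = N := Nat.mul_div_cancel' hdvd
  have hN0 : 0 < N := hN
  have hm0 : 0 < m := Nat.div_pos (Nat.le_of_dvd hN0 hdvd) hd0
  have hNne' : (N : ℂ) ≠ 0 := Nat.cast_ne_zero.2 hNne
  constructor
  · funext p
    rw [rhoT, weilVec_apply N d hdvd hd0 p]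
    by_cases h : d ∣ p.1.val ∧ m ∣ p.2.val
    · obtain ⟨⟨j, hj⟩, ⟨k, hk⟩⟩ := h
      have hdiv : p.1.val * p.2.val = N * (j * k) := by
        rw [hj, hk, ← hdm]; ring
      have : eTwoPi (((p.1.val * p.2.val : ℕ) : ℝ) / N) = 1 := by
        rw [show (((p.1.val * p.2.val : ℕ) : ℝ) / N) = (((j * k : ℕ) : ℤ) : ℝ) by
          rw [hdiv]; push_cast; field_simp, eTwoPi_int]
      rw [this, one_mul]
    · rw [if_neg h, mul_zero]
  · funext p
    set a := p.1.val with ha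
    set b := p.2.val with hb
    rw [rhoS, weilVec_apply N d hdvd hd0 p]
    rw [← ha, ← hb, ← hm]
    have hdR : (d : ℝ) ≠ 0 := Nat.cast_ne_zero.2 hd0.ne'
    have hmR : (m : ℝ) ≠ 0 := Nat.cast_ne_zero.2 hm0.ne'
    have hdmR : (N : ℝ) = (d : ℝ) * m := by rw [← hdm]; push_cast; ring
    have collapse : (∑ q : ZMod N × ZMod N,
        eTwoPi (-(((q.1.val * b + a * q.2.val : ℕ) : ℝ) / N)) * weilVec N d q)
        = ∑ j ∈ Finset.range m, ∑ k ∈ Finset.range d,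
            eTwoPi (-((((((j * d : ℕ) : ZMod N)).val * b
              + a * (((k * m : ℕ) : ZMod N)).val : ℕ) : ℝ) / N)) := by
      simp only [weilVec, ← hm, Finset.sum_apply, Finset.mul_sum]
      rw [Finset.sum_comm]
      refine Finset.sum_congr rfl fun j _ => ?_
      rw [Finset.sum_comm]
      refine Finset.sum_congr rfl fun k _ => ?_
      simp [Pi.single_apply, mul_ite, Finset.sum_ite_eq']
    rw [collapse]
    have hlt1 : ∀ j, j ∈ Finset.range m → j * d < N := by
      intro j hj
      rw [← hdm, mul_comm d m]
      exact (Nat.mul_lt_mul_right hd0).2 (mem_range.1 hj)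
    have hlt2 : ∀ k, k ∈ Finset.range d → k * m < N := by
      intro k hk
      rw [← hdm]
      exact (Nat.mul_lt_mul_right hm0).2 (mem_range.1 hk)
    have key : ∀ j ∈ Finset.range m, ∀ k ∈ Finset.range d,
        eTwoPi (-((((((j * d : ℕ) : ZMod N)).val * b
              + a * (((k * m : ℕ) : ZMod N)).val : ℕ) : ℝ) / N))
        = eTwoPi (-((j * b : ℝ) / m)) * eTwoPi (-((k * a : ℝ) / d)) := by
      intro j hj k hk
      rw [ZMod.val_cast_of_lt (hlt1 j hj), ZMod.val_cast_of_lt (hlt2 k hk)]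
      rw [show (-(((j * d * b + a * (k * m) : ℕ) : ℝ) / N))
          = (-((j * b : ℝ) / m)) + (-((k * a : ℝ) / d)) by
        push_cast
        rw [hdmR]
        field_simp
        ring]
      exact eTwoPi_add _ _
    rw [Finset.sum_congr rfl fun j hj => Finset.sum_congr rfl fun k hk => key j hj k hk]
    rw [← Finset.sum_mul_sum, gsum m b hm0, gsum d a hd0]
    by_cases h1 : d ∣ a <;> by_cases h2 : m ∣ b <;>
      simp only [h1, h2, if_true, if_false, and_true, and_false, true_and, false_and,
        mul_zero, zero_mul, mul_one, if_neg, not_false_iff, if_pos] <;>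
      first
        | (rw [show ((m : ℂ) * d) = (N : ℂ) by rw [← hdm]; push_cast; ring]; field_simp)
        | simp [h1, h2]
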